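/- A random lifetime X with support (0,∞) and differentiable cumulative hazard has a Weibull distribution (i.e., P(X > t) = exp(-c·t^m) for some c > 0, m > 0) if and only if its Gini-type index GT_X(t) is constant on (0,∞); moreover, if GT_X(t) = r for all t with -1 < r < 1, then the Weibull shape parameter is m = (1+r)/(1-r). -/

import Mathlib

open MeasureTheory intervalIntegral

noncomputable def GTindex (H : ℝ → ℝ) (t : ℝ) : ℝ :=
  1 - 2 / (t * H t) * ∫ u in (0:ℝ)..t, H u

/-- A lifetime with support `(0,∞)` and differentiable cumulative hazard `H` is Weibull
(`H t = c * t ^ m`, i.e. `P(X > t) = exp (-c t^m)`) iff its Gini-type index is constant;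
moreover if `GT_X ≡ r` with `-1 < r < 1` then the shape parameter is `m = (1+r)/(1-r)`. -/
theorem stmt4 (H : ℝ → ℝ) (hH0 : H 0 = 0)
    (hHcont : ContinuousOn H (Set.Ici 0))
    (hHdiff : ∀ t, 0 < t → DifferentiableAt ℝ H t)
    (hHpos : ∀ t, 0 < t → 0 < H t) :
    ((∃ c m : ℝ, 0 < c ∧ 0 < m ∧ ∀ t, 0 ≤ t → H t = c * t ^ m) ↔
      (∃ r : ℝ, -1 < r ∧ r < 1 ∧ ∀ t, 0 < t → GTindex H t = r)) ∧
    (∀ r : ℝ, -1 < r → r < 1 → (∀ t, 0 < t → GTindex H t = r) →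
      ∃ c : ℝ, 0 < c ∧ ∀ t, 0 ≤ t → H t = c * t ^ ((1 + r) / (1 - r))) := by
  set F : ℝ → ℝ := fun t => ∫ u in (0:ℝ)..t, H u with hFdef
  have hHint : ∀ t : ℝ, 0 ≤ t → IntervalIntegrable H volume 0 t := by
    intro t ht
    apply ContinuousOn.intervalIntegrable
    apply hHcont.mono
    rw [Set.uIcc_of_le ht]
    exact fun x hx => hx.1
  have hHcontIoi : ContinuousOn H (Set.Ioi 0) :=
    fun x hx => (hHdiff x hx).continuousAt.continuousWithinAt
  have hFderiv : ∀ t : ℝ, 0 < t → HasDerivAt F (H t) t := by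
    intro t ht
    exact integral_hasDerivAt_right (hHint t ht.le)
      (hHcontIoi.stronglyMeasurableAtFilter isOpen_Ioi t ht)
      (hHdiff t ht).continuousAt
  -- key backward lemma
  have key : ∀ r : ℝ, -1 < r → r < 1 → (∀ t, 0 < t → GTindex H t = r) →
      ∃ c : ℝ, 0 < c ∧ ∀ t, 0 ≤ t → H t = c * t ^ ((1 + r) / (1 - r)) := by
    intro r hr1 hr2 hGT
    set m : ℝ := (1 + r) / (1 - r) with hmdef
    have hr1' : (0:ℝ) < 1 + r := by linarith
    have hr2' : (0:ℝ) < 1 - r := by linarith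
    have hm : 0 < m := div_pos hr1' hr2'
    have hFeq : ∀ t, 0 < t → F t = (1 - r) / 2 * (t * H t) := by
      intro t ht
      have hth : 0 < t * H t := mul_pos ht (hHpos t ht)
      have h := hGT t ht
      unfold GTindex at h
      show (∫ u in (0:ℝ)..t, H u) = (1 - r) / 2 * (t * H t)
      field_simp at h
      have hH : H t ≠ 0 := (hHpos t ht).ne'
      have h' : (2 * ∫ u in (0:ℝ)..t, H u) / H t = t - t * r := by linarith
      rw [div_eq_iff hH] at h'
      linear_combination h' / 2
    set φ : ℝ → ℝ := fun t => F t * t ^ (-(m + 1)) with hφdef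
    have hmm : (1 - r) / 2 * (m + 1) = 1 := by
      rw [hmdef]; field_simp; ring
    have hφ' : ∀ t : ℝ, 0 < t → HasDerivAt φ 0 t := by
      intro t ht
      have h1 : HasDerivAt (fun x : ℝ => x ^ (-(m + 1))) (-(m + 1) * t ^ (-(m + 1) - 1)) t :=
        Real.hasDerivAt_rpow_const (Or.inl ht.ne')
      have h2 : HasDerivAt φ (H t * t ^ (-(m + 1)) + F t * (-(m + 1) * t ^ (-(m + 1) - 1))) t :=
        (hFderiv t ht).mul h1
      convert h2 using 1
      rw [hFeq t ht]
      have hA : t ^ (-(m + 1)) = t ^ (-(m + 1) - 1) * t := by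
        rw [← Real.rpow_add_one ht.ne']; ring_nf
      rw [hA]
      set A := t ^ (-(m + 1) - 1)
      linear_combination (t * H t * A) * hmm
    have hφdiff : DifferentiableOn ℝ φ (Set.Ioi 0) :=
      fun t ht => (hφ' t ht).differentiableAt.differentiableWithinAt
    have hφconst : ∀ t : ℝ, 0 < t → φ t = φ 1 := by
      intro t ht
      apply (convex_Ioi (0:ℝ)).is_const_of_fderivWithin_eq_zero hφdiff _ ht
        (Set.mem_Ioi.2 one_pos)
      intro x hx
      rw [fderivWithin_of_isOpen isOpen_Ioi hx, (hφ' x hx).hasFDerivAt.fderiv]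
      ext y; simp
    set C : ℝ := F 1 with hCdef
    have hC : 0 < C := by
      exact intervalIntegral_pos_of_pos_on (hHint 1 zero_le_one)
        (fun x hx => hHpos x hx.1) one_pos
    have hφ1 : φ 1 = C := by
      simp [hφdef, hCdef, Real.one_rpow]
    refine ⟨2 * C / (1 - r), by positivity, ?_⟩
    intro t ht
    rcases eq_or_lt_of_le ht with h | h
    · rw [← h, hH0, Real.zero_rpow hm.ne', mul_zero]
    · have hφt := (hφconst t h).trans hφ1
      have htm : (0:ℝ) < t ^ m := Real.rpow_pos_of_pos h m
      have hFt : F t = C * (t ^ m * t) := by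
        have hne : t ^ (-(m + 1)) ≠ 0 := (Real.rpow_pos_of_pos h _).ne'
        have hmul : t ^ (-(m + 1)) * (t ^ m * t) = 1 := by
          rw [← Real.rpow_add_one h.ne' m, ← Real.rpow_add h,
            show -(m + 1) + (m + 1) = (0:ℝ) by ring, Real.rpow_zero]
        have hφt' : F t * t ^ (-(m + 1)) = C := hφt
        have : F t * t ^ (-(m + 1)) * (t ^ m * t) = C * (t ^ m * t) := by rw [hφt']
        rw [mul_assoc, hmul, mul_one] at this
        exact this
      have e1 := (hFeq t h).symm.trans hFt
      have h2 : H t * (1 - r) * t = 2 * C * t ^ m * t := by linear_combination 2 * e1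
      have h3 : H t * (1 - r) = 2 * C * t ^ m := mul_right_cancel₀ h.ne' h2
      field_simp
      linear_combination h3
  constructor
  · constructor
    · rintro ⟨c, m, hc, hm, hct⟩
      have hm1 : (0:ℝ) < m + 1 := by linarith
      refine ⟨(m - 1) / (m + 1), (lt_div_iff₀ hm1).2 (by linarith),
        (div_lt_one hm1).2 (by linarith), ?_⟩
      intro t ht
      have hInt : (∫ u in (0:ℝ)..t, H u) = c * t ^ (m + 1) / (m + 1) := by
        have : (∫ u in (0:ℝ)..t, H u) = ∫ u in (0:ℝ)..t, c * u ^ m := by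
          apply intervalIntegral.integral_congr
          intro x hx
          rw [Set.uIcc_of_le ht.le] at hx
          exact hct x hx.1
        rw [this, intervalIntegral.integral_const_mul, integral_rpow (Or.inl (by linarith)),
          Real.zero_rpow hm1.ne']
        ring
      have htm : (0:ℝ) < t ^ m := Real.rpow_pos_of_pos ht m
      have hts : t ^ (m + 1) = t ^ m * t := Real.rpow_add_one ht.ne' m
      unfold GTindex
      rw [hInt, hct t ht.le, hts]
      field_simp
      ring
    · rintro ⟨r, hr1, hr2, hGT⟩
      obtain ⟨c, hc, hct⟩ := key r hr1 hr2 hGT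
      exact ⟨c, (1 + r) / (1 - r), hc, div_pos (by linarith) (by linarith), hct⟩
  · exact key
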